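/- For all natural numbers l, m, l₁, m₁, i, j, i₁, j₁: if ((1/6 + i)·2^{-l} + j)·3^{-m} = ((1/6 + i₁)·2^{-l₁} + j₁)·3^{-m₁} in ℚ, then l = l₁ and m = m₁. Consequently, for distinct pairs (l,m) ≠ (l₁,m₁) the sets S(l,m) and S(l₁,m₁) are disjoint. -/

import Mathlib

lemma lorKey (l m i j : ℕ) :
    ((1 / 6 + (i : ℚ)) * (2 : ℚ) ^ (-(l : ℤ)) + (j : ℚ)) * (3 : ℚ) ^ (-(m : ℤ)) =
      ((1 + 6 * i + 6 * j * 2 ^ l : ℕ) : ℚ) / (((2 ^ (l+1) * 3 ^ (m+1) : ℕ) : ℚ)) := by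
  push_cast
  rw [zpow_neg, zpow_neg, zpow_natCast, zpow_natCast]
  have h2 : ((2:ℚ)^l) ≠ 0 := by positivity
  have h3 : ((3:ℚ)^m) ≠ 0 := by positivity
  field_simp
  ring

lemma lorVal (p : ℕ) [Fact p.Prime] (l m i j : ℕ)
    (x : ℚ) (hx : x = ((1 / 6 + (i : ℚ)) * (2 : ℚ) ^ (-(l : ℤ)) + (j : ℚ)) * (3 : ℚ) ^ (-(m : ℤ))) :
    padicValRat p x = padicValNat p (1 + 6 * i + 6 * j * 2 ^ l)
      - (l+1) * padicValNat p 2 - (m+1) * padicValNat p 3 := by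
  rw [hx, lorKey]
  rw [padicValRat.div (by positivity) (by positivity)]
  rw [padicValRat.of_nat, padicValRat.of_nat]
  rw [padicValNat.mul (by positivity) (by positivity)]
  rw [padicValNat.pow _ _, padicValNat.pow _ _]
  push_cast
  ring

lemma lorMain (l m l₁ m₁ i j i₁ j₁ : ℕ)
    (h : ((1 / 6 + (i : ℚ)) * (2 : ℚ) ^ (-(l : ℤ)) + (j : ℚ)) * (3 : ℚ) ^ (-(m : ℤ)) =
        ((1 / 6 + (i₁ : ℚ)) * (2 : ℚ) ^ (-(l₁ : ℤ)) + (j₁ : ℚ)) * (3 : ℚ) ^ (-(m₁ : ℤ))) :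
    l = l₁ ∧ m = m₁ := by
  set x := ((1 / 6 + (i : ℚ)) * (2 : ℚ) ^ (-(l : ℤ)) + (j : ℚ)) * (3 : ℚ) ^ (-(m : ℤ)) with hx
  have hN : ∀ a b : ℕ, padicValNat 2 (1 + 6*a + 6*b) = 0 ∧ padicValNat 3 (1 + 6*a + 6*b) = 0 := by
    intro a b
    constructor <;> apply padicValNat.eq_zero_of_not_dvd <;> rintro ⟨k, hk⟩ <;> omega
  have v2 : ∀ (l' m' i' j' : ℕ), x = ((1 / 6 + (i' : ℚ)) * (2 : ℚ) ^ (-(l' : ℤ)) + (j' : ℚ)) * (3 : ℚ) ^ (-(m' : ℤ)) →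
      padicValRat 2 x = -(l' + 1) ∧ padicValRat 3 x = -(m' + 1) := by
    intro l' m' i' j' hx'
    obtain ⟨h2, h3⟩ := hN i' (j' * 2 ^ l')
    rw [show 6 * (j' * 2 ^ l') = 6 * j' * 2 ^ l' from by ring] at h2 h3
    have c23 : padicValNat 2 3 = 0 := padicValNat.eq_zero_of_not_dvd (by norm_num)
    have c32 : padicValNat 3 2 = 0 := padicValNat.eq_zero_of_not_dvd (by norm_num)
    constructor
    · rw [lorVal 2 l' m' i' j' x hx', h2, c23, padicValNat.self (by norm_num)]
      push_cast; ring
    · rw [lorVal 3 l' m' i' j' x hx', h3, c32, padicValNat.self (by norm_num)]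
      push_cast; ring
  obtain ⟨a2, a3⟩ := v2 l m i j rfl
  obtain ⟨b2, b3⟩ := v2 l₁ m₁ i₁ j₁ (hx.trans h)
  constructor
  · have := a2.symm.trans b2
    omega
  · have := a3.symm.trans b3
    omega


/-- The support set of `D₂^l D₃^m e_{1/6}`:
`S(l,m) = {((1/6 + i)·2^{-l} + j)·3^{-m} : i < 2^l, j < 3^m}`. -/
def lorSupportSet (l m : ℕ) : Set ℚ :=
  {x | ∃ i j : ℕ, i < 2 ^ l ∧ j < 3 ^ m ∧
    x = ((1 / 6 + (i : ℚ)) * (2 : ℚ) ^ (-(l : ℤ)) + (j : ℚ)) * (3 : ℚ) ^ (-(m : ℤ))}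

theorem stmt1 :
    (∀ l m l₁ m₁ i j i₁ j₁ : ℕ,
      ((1 / 6 + (i : ℚ)) * (2 : ℚ) ^ (-(l : ℤ)) + (j : ℚ)) * (3 : ℚ) ^ (-(m : ℤ)) =
        ((1 / 6 + (i₁ : ℚ)) * (2 : ℚ) ^ (-(l₁ : ℤ)) + (j₁ : ℚ)) * (3 : ℚ) ^ (-(m₁ : ℤ)) →
      l = l₁ ∧ m = m₁) ∧
    (∀ l m l₁ m₁ : ℕ, (l, m) ≠ (l₁, m₁) →
      Disjoint (lorSupportSet l m) (lorSupportSet l₁ m₁)) := by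
  refine ⟨fun l m l₁ m₁ i j i₁ j₁ h => lorMain l m l₁ m₁ i j i₁ j₁ h, ?_⟩
  intro l m l₁ m₁ hne
  rw [Set.disjoint_left]
  rintro x ⟨i, j, _, _, rfl⟩ ⟨i₁, j₁, _, _, hx⟩
  obtain ⟨rfl, rfl⟩ := lorMain l m l₁ m₁ i j i₁ j₁ hx
  exact hne rfl
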